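/- For any i ∈ N, the Shapley value φ(i) = ∑_{m=0}^{n-1} (1/n) · (1/C(n-1,m)) · ∑_{S ⊆ N\{i}, |S|=m} [u(S∪{i}) - u(S)] equals ∑_{S ⊆ N\{i}} I(S∪{i})/(|S|+1), where I is the Harsanyi dividend of u. -/

import Mathlib

open Finset


lemma beta_sum (r : ℕ) : ∀ t : ℕ,
    ∑ j ∈ range (r+1), (-1:ℝ)^j * (r.choose j) / (t+1+j)
      = t.factorial * r.factorial / (t+r+1).factorial := by
  induction r with
  | zero =>
    intro t
    have h : ((t+1).factorial : ℝ) = ((t:ℝ)+1) * t.factorial := by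
      rw [Nat.factorial_succ]; push_cast; ring
    simp only [range_one, sum_singleton, pow_zero, Nat.choose_self, Nat.factorial_zero]
    rw [show t + 0 + 1 = t + 1 from rfl, h]
    have ht : (t:ℝ) + 1 ≠ 0 := by positivity
    have ht2 : (t.factorial : ℝ) ≠ 0 := by positivity
    push_cast
    field_simp
    simp [Finset.sum_range_one, ht]
  | succ r ih =>
    intro t
    set f : ℕ → ℝ := fun j => (-1:ℝ)^j * ((r+1).choose j) / (t+1+j) with hf
    set g : ℕ → ℝ := fun j => (-1:ℝ)^j * (r.choose j) / (t+1+j) with hg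
    set h : ℕ → ℝ := fun j => (-1:ℝ)^j * (r.choose j) / ((t+1)+1+j) with hh
    have hfg : ∀ j, f (j+1) = g (j+1) - h j := by
      intro j
      simp only [hf, hg, hh, Nat.choose_succ_succ]
      push_cast
      have e1 : (t:ℝ) + 1 + (j+1) = (t+1)+1+j := by ring
      rw [e1]
      have hd : ((t:ℝ)+1)+1+j ≠ 0 := by positivity
      field_simp
      ring
    have key : ∑ j ∈ range (r+2), f j
        = ∑ j ∈ range (r+1), g j - ∑ j ∈ range (r+1), h j := by
      rw [Finset.sum_range_succ' f (r+1)]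
      have : ∑ j ∈ range (r+1), f (j+1) = ∑ j ∈ range (r+1), (g (j+1) - h j) :=
        Finset.sum_congr rfl (fun j _ => hfg j)
      rw [this, Finset.sum_sub_distrib]
      have hg0 : ∑ j ∈ range (r+1), g (j+1)
          = ∑ j ∈ range (r+2), g j - g 0 := by
        rw [Finset.sum_range_succ' g (r+1)]; ring
      have hgtop : ∑ j ∈ range (r+2), g j = ∑ j ∈ range (r+1), g j := by
        rw [Finset.sum_range_succ]
        simp [hg, Nat.choose_succ_self]
      have hf0 : f 0 = g 0 := by simp [hf, hg]
      rw [hg0, hgtop, hf0]; ring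
    rw [show r + 1 + 1 = r + 2 from rfl, key, ih t]
    have ih2 := ih (t+1)
    have e2 : ∀ j : ℕ, ((t+1:ℕ):ℝ) + 1 + j = ((t:ℝ)+1)+1+j := by intro j; push_cast; ring
    simp only [hh]
    rw [show ∑ j ∈ range (r+1), (-1:ℝ)^j * (r.choose j) / ((t+1)+1+j)
        = ∑ j ∈ range (r+1), (-1:ℝ)^j * (r.choose j) / (((t+1:ℕ):ℝ)+1+j) from
      Finset.sum_congr rfl (fun j _ => by rw [e2 j]), ih2]
    have e3 : t + 1 + r + 1 = t + r + 2 := by ring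
    have e4 : t + (r+1) + 1 = t + r + 2 := by ring
    rw [e3, e4]
    have h1 : ((t+r+2).factorial : ℝ) = ((t:ℝ)+r+2) * (t+r+1).factorial := by
      rw [show t+r+2 = (t+r+1)+1 from rfl, Nat.factorial_succ]; push_cast; ring
    have h2 : (((t+1).factorial : ℕ) : ℝ) = ((t:ℝ)+1) * t.factorial := by
      rw [Nat.factorial_succ]; push_cast; ring
    have h3 : (((r+1).factorial : ℕ) : ℝ) = ((r:ℝ)+1) * r.factorial := by
      rw [Nat.factorial_succ]; push_cast; ring
    rw [h1, h2, h3]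
    have p1 : ((t+r+1).factorial : ℝ) ≠ 0 := by positivity
    have p2 : (t:ℝ)+r+2 ≠ 0 := by positivity
    field_simp
    ring

lemma coeff_sum {α : Type*} [DecidableEq α] (M T : Finset α) (hT : T ⊆ M) :
    ∑ S ∈ M.powerset.filter (fun S => T ⊆ S), (-1:ℝ)^(S.card - T.card) / (S.card + 1)
      = T.card.factorial * (M.card - T.card).factorial / (M.card + 1).factorial := by
  -- bijection S ↦ S \ T, inverse R ↦ T ∪ R, between filter and (M \ T).powerset
  have hbij : ∑ S ∈ M.powerset.filter (fun S => T ⊆ S), (-1:ℝ)^(S.card - T.card) / (S.card + 1)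
      = ∑ R ∈ (M \ T).powerset, (-1:ℝ)^(R.card) / ((T.card + R.card : ℕ) + 1) := by
    refine Finset.sum_nbij' (fun S => S \ T) (fun R => T ∪ R) ?_ ?_ ?_ ?_ ?_
    · intro S hS
      simp only [mem_filter, mem_powerset] at hS ⊢
      exact sdiff_subset_sdiff hS.1 (Finset.Subset.refl T)
    · intro R hR
      simp only [mem_filter, mem_powerset] at hR ⊢
      constructor
      · exact union_subset hT (hR.trans (sdiff_subset))
      · exact subset_union_left
    · intro S hS
      simp only [mem_filter, mem_powerset] at hS
      exact union_sdiff_of_subset hS.2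
    · intro R hR
      simp only [mem_powerset] at hR
      have : Disjoint T R := disjoint_of_subset_right hR (disjoint_sdiff)
      exact union_sdiff_cancel_left this
    · intro S hS
      simp only [mem_filter, mem_powerset] at hS
      have h1 : (S \ T).card = S.card - T.card := card_sdiff_of_subset hS.2
      rw [h1, Nat.add_sub_cancel' (card_le_card hS.2)]
  rw [hbij]
  rw [Finset.sum_powerset_apply_card (fun j => (-1:ℝ)^j / ((T.card + j : ℕ) + 1))]
  have hcard : (M \ T).card = M.card - T.card := card_sdiff_of_subset hT
  rw [hcard]
  set r := M.card - T.card
  set t := T.card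
  have hle : t ≤ M.card := card_le_card hT
  have hM1 : M.card + 1 = t + r + 1 := by omega
  rw [hM1, ← beta_sum r t]
  refine Finset.sum_congr rfl (fun j hj => ?_)
  rw [nsmul_eq_mul]
  push_cast
  ring

lemma sum_powerset_swap {α : Type*} [DecidableEq α] (M : Finset α)
    (F : Finset α → Finset α → ℝ) :
    ∑ S ∈ M.powerset, ∑ T ∈ S.powerset, F S T
      = ∑ T ∈ M.powerset, ∑ S ∈ M.powerset.filter (fun S => T ⊆ S), F S T := by
  have h1 : ∀ S ∈ M.powerset, S.powerset = M.powerset.filter (fun T => T ⊆ S) := by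
    intro S hS
    rw [mem_powerset] at hS
    ext T
    simp only [mem_powerset, mem_filter]
    exact ⟨fun h => ⟨h.trans hS, h⟩, fun h => h.2⟩
  calc ∑ S ∈ M.powerset, ∑ T ∈ S.powerset, F S T
      = ∑ S ∈ M.powerset, ∑ T ∈ M.powerset.filter (fun T => T ⊆ S), F S T :=
        Finset.sum_congr rfl fun S hS => by rw [h1 S hS]
    _ = ∑ S ∈ M.powerset, ∑ T ∈ M.powerset, if T ⊆ S then F S T else 0 := by
        simp_rw [sum_filter]
    _ = ∑ T ∈ M.powerset, ∑ S ∈ M.powerset, if T ⊆ S then F S T else 0 := Finset.sum_comm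
    _ = ∑ T ∈ M.powerset, ∑ S ∈ M.powerset.filter (fun S => T ⊆ S), F S T := by
        simp_rw [sum_filter]

theorem shapley_eq_harsanyi_allocation {N : Type*} [Fintype N] [DecidableEq N]
    (u I : Finset N → ℝ) (hu : u ∅ = 0)
    (hI : ∀ S : Finset N, I S = ∑ T ∈ S.powerset, (-1 : ℝ) ^ (S.card - T.card) * u T)
    (i : N) :
    ∑ S ∈ (Finset.univ.erase i).powerset,
        ((S.card.factorial * (Fintype.card N - S.card - 1).factorial : ℝ) /
          (Fintype.card N).factorial) * (u (insert i S) - u S)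
      = ∑ S ∈ (Finset.univ.erase i).powerset, I (insert i S) / (S.card + 1) := by
  classical
  set n := Fintype.card N with hn
  set M := Finset.univ.erase i with hM
  have hiM : i ∉ M := notMem_erase i _
  have hMc : M.card = n - 1 := by rw [hM, card_erase_of_mem (mem_univ i), card_univ]
  have hn1 : 1 ≤ n := Fintype.card_pos_iff.mpr ⟨i⟩
  have step1 : ∀ S ∈ M.powerset, I (insert i S) / (S.card + 1)
      = ∑ T ∈ S.powerset,
          (-1:ℝ)^(S.card - T.card) / (S.card + 1) * (u (insert i T) - u T) := by
    intro S hS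
    rw [mem_powerset] at hS
    have hiS : i ∉ S := fun h => hiM (hS h)
    rw [hI, Finset.sum_powerset_insert hiS, card_insert_of_notMem hiS]
    have hA : ∑ T ∈ S.powerset, (-1:ℝ)^(S.card + 1 - T.card) * u T
        = ∑ T ∈ S.powerset, -((-1:ℝ)^(S.card - T.card) * u T) := by
      refine Finset.sum_congr rfl fun T hT => ?_
      rw [mem_powerset] at hT
      have hle : T.card ≤ S.card := card_le_card hT
      have : S.card + 1 - T.card = (S.card - T.card) + 1 := by omega
      rw [this, pow_succ]
      ring
    have hB : ∑ T ∈ S.powerset, (-1:ℝ)^(S.card + 1 - (insert i T).card) * u (insert i T)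
        = ∑ T ∈ S.powerset, (-1:ℝ)^(S.card - T.card) * u (insert i T) := by
      refine Finset.sum_congr rfl fun T hT => ?_
      rw [mem_powerset] at hT
      have hiT : i ∉ T := fun h => hiS (hT h)
      have hle : T.card ≤ S.card := card_le_card hT
      rw [card_insert_of_notMem hiT]
      congr 2
      omega
    rw [hA, hB, ← Finset.sum_add_distrib, Finset.sum_div]
    refine Finset.sum_congr rfl fun T hT => ?_
    ring
  have rhs_eq : ∑ S ∈ M.powerset, I (insert i S) / (S.card + 1)
      = ∑ T ∈ M.powerset,
          ((T.card.factorial : ℝ) * (M.card - T.card).factorial /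
            (M.card + 1).factorial) * (u (insert i T) - u T) := by
    rw [Finset.sum_congr rfl step1,
      sum_powerset_swap M (fun S T =>
        (-1:ℝ)^(S.card - T.card) / (S.card + 1) * (u (insert i T) - u T))]
    refine Finset.sum_congr rfl fun T hT => ?_
    rw [mem_powerset] at hT
    rw [← Finset.sum_mul, coeff_sum M T hT]
  rw [rhs_eq]
  refine Finset.sum_congr rfl fun S hS => ?_
  rw [mem_powerset] at hS
  have hle : S.card ≤ M.card := card_le_card hS
  have e1 : M.card - S.card = n - S.card - 1 := by omega
  have e2 : M.card + 1 = n := by omega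
  rw [e1, e2]
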